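/- Let $s > 0$, $p = 1 - e^{-2s}$, $q = 1 - e^{2s}$, and let $h : \mathbb{R}^n \to [0,\infty)$ be measurable with $0 < \int_{\mathbb{R}^n} e^{\frac1p\langle x, z\rangle} h(z)^{1/p}\, dz < \infty$ for every $x \in \mathbb{R}^n$. Then $\| P_s[(h/\gamma)^{1/p}] \|_{L^q(\gamma)}^q = C_s^q\, e^{ns} \int_{\mathbb{R}^n} \big( \int_{\mathbb{R}^n} e^{\frac1p\langle x, z\rangle} h(z)^{1/p}\, dz \big)^q dx$, where $C_s := \big( (2\pi)^{\frac12(\frac1p + \frac1{q'}) - 1} / \sqrt{1 - e^{-2s}} \big)^n$ and $q' = q/(q-1)$. -/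

import Mathlib

open MeasureTheory Real Filter
open scoped ENNReal

noncomputable section

/-- The standard Gaussian density `γ(x) = (2π)^{-n/2} e^{-|x|²/2}`. -/
def stdGauss (n : ℕ) (x : EuclideanSpace ℝ (Fin n)) : ℝ :=
  (2 * Real.pi) ^ (-(n : ℝ) / 2) * Real.exp (-‖x‖ ^ 2 / 2)

/-- The Ornstein–Uhlenbeck semigroup `P_s`, acting on `[0,∞]`-valued functions. -/
def ouSemigroup {n : ℕ} (s : ℝ) (g : EuclideanSpace ℝ (Fin n) → ℝ≥0∞)
    (x : EuclideanSpace ℝ (Fin n)) : ℝ≥0∞ :=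
  ∫⁻ y, ENNReal.ofReal
      (Real.exp (-‖Real.exp (-s) • x - y‖ ^ 2 / (2 * (1 - Real.exp (-2 * s)))) /
        (2 * Real.pi * (1 - Real.exp (-2 * s))) ^ ((n : ℝ) / 2)) * g y

/-- `‖g‖_{L^q(γ)}^q = ∫ g^q dγ` for a `[0,∞]`-valued function `g`. -/
def gaussLqNormPow {n : ℕ} (q : ℝ) (g : EuclideanSpace ℝ (Fin n) → ℝ≥0∞) : ℝ≥0∞ :=
  ∫⁻ x, g x ^ q * ENNReal.ofReal (stdGauss n x)

/-- `F(x) = ∫ e^{⟨x,z⟩/p} h(z)^{1/p} dz`, valued in `[0,∞]`. -/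
def expTransform {n : ℕ} (p : ℝ) (h : EuclideanSpace ℝ (Fin n) → ℝ)
    (x : EuclideanSpace ℝ (Fin n)) : ℝ≥0∞ :=
  ∫⁻ z, ENNReal.ofReal (Real.exp ((1 / p) * (inner ℝ x z : ℝ))) * ENNReal.ofReal (h z) ^ (1 / p)

set_option maxHeartbeats 1000000 in
/-- Identity (2.1): at the endpoint `p = 1 - e^{-2s}`, `q = 1 - e^{2s}`,
`‖P_s[(h/γ)^{1/p}]‖_{L^q(γ)}^q = C_s^q e^{ns} ∫ F(x)^q dx`
with `C_s = ((2π)^{(1/p+1/q')/2 - 1}/√(1-e^{-2s}))^n`. -/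
theorem endpoint_norm_identity (n : ℕ) (hn : 1 ≤ n) (s p q : ℝ) (hs : 0 < s)
    (hp : p = 1 - Real.exp (-2 * s)) (hq : q = 1 - Real.exp (2 * s))
    (h : EuclideanSpace ℝ (Fin n) → ℝ)
    (hmeas : Measurable h) (hpos : ∀ z, 0 ≤ h z)
    (hF : ∀ x, 0 < expTransform p h x ∧ expTransform p h x < ⊤) :
    gaussLqNormPow q (ouSemigroup s fun y =>
        (ENNReal.ofReal (h y) / ENNReal.ofReal (stdGauss n y)) ^ (1 / p)) =
      ENNReal.ofReal
          ((((2 * Real.pi) ^ ((1 / p + 1 / (q / (q - 1))) / 2 - 1) /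
              Real.sqrt (1 - Real.exp (-2 * s))) ^ n) ^ q *
            Real.exp (n * s)) *
        ∫⁻ x, expTransform p h x ^ q := by
  have hπ : (0:ℝ) < 2 * Real.pi := by positivity
  set a : ℝ := Real.exp (-s) with ha_def
  have ha : 0 < a := Real.exp_pos _
  have ha1 : a < 1 := by rw [ha_def]; exact Real.exp_lt_one_iff.mpr (by linarith)
  have ha2 : Real.exp (-2 * s) = a ^ 2 := by
    rw [ha_def, sq, ← Real.exp_add]; congr 1; ring
  have hpa : p = 1 - a ^ 2 := by rw [hp, ha2]
  have hp0 : 0 < p := by nlinarith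
  have hexp2s : Real.exp (2 * s) = (a ^ 2)⁻¹ := by
    rw [← ha2, ← Real.exp_neg]; congr 1; ring
  have hqa : q = -p / a ^ 2 := by
    rw [hq, hexp2s, hpa]; field_simp; ring
  have hq0 : q < 0 := by
    rw [hqa, neg_div]
    have : 0 < p / a ^ 2 := div_pos hp0 (by positivity)
    linarith
  set c : ℝ := (2 * Real.pi) ^ ((n : ℝ) / (2 * p) - (n : ℝ) / 2) * p ^ (-(n : ℝ) / 2)
    with hc_def
  have hc : 0 < c := by positivity
  set Kc : ℝ := c ^ q * (2 * Real.pi) ^ (-(n : ℝ) / 2) with hKc_def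
  have hKc0 : 0 < Kc := mul_pos (Real.rpow_pos_of_pos hc q) (Real.rpow_pos_of_pos hπ _)
  -- measurability of the transform
  have hFmeas : Measurable (expTransform p h) := by
    unfold expTransform
    exact Measurable.lintegral_prod_right'
      (f := fun w : EuclideanSpace ℝ (Fin n) × EuclideanSpace ℝ (Fin n) =>
        ENNReal.ofReal (Real.exp ((1 / p) * (inner ℝ w.1 w.2 : ℝ))) *
          ENNReal.ofReal (h w.2) ^ (1 / p))
      (((continuous_const.mul continuous_inner).rexp.measurable).ennreal_ofReal.mul
        (((hmeas.comp measurable_snd).ennreal_ofReal).pow_const _))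
  have hGmeas : Measurable fun u => expTransform p h u ^ q := hFmeas.pow_const q
  -- pointwise real kernel identity
  have keyreal : ∀ x y : EuclideanSpace ℝ (Fin n),
      Real.exp (-‖a • x - y‖ ^ 2 / (2 * p)) / (2 * Real.pi * p) ^ ((n : ℝ) / 2) /
          stdGauss n y ^ (1 / p)
        = (c * Real.exp (-(a ^ 2 * ‖x‖ ^ 2) / (2 * p))) *
            Real.exp ((1 / p) * (inner ℝ (a • x) y : ℝ)) := by
    intro x y
    have hip : (inner ℝ (a • x) y : ℝ) = a * (inner ℝ x y : ℝ) := real_inner_smul_left x y a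
    have hns : ‖a • x - y‖ ^ 2 = a ^ 2 * ‖x‖ ^ 2 - 2 * (a * (inner ℝ x y : ℝ)) + ‖y‖ ^ 2 := by
      rw [norm_sub_sq_real, norm_smul, real_inner_smul_left, Real.norm_eq_abs,
        abs_of_pos ha, mul_pow]
    rw [hip, hns]
    have e1 : (2 * Real.pi * p) ^ ((n : ℝ) / 2)
        = Real.exp ((Real.log (2 * Real.pi) + Real.log p) * ((n : ℝ) / 2)) := by
      rw [Real.rpow_def_of_pos (by positivity), Real.log_mul (by positivity) hp0.ne']
    have e2 : stdGauss n y ^ (1 / p)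
        = Real.exp ((Real.log (2 * Real.pi) * (-(n : ℝ) / 2) + -‖y‖ ^ 2 / 2) * (1 / p)) := by
      unfold stdGauss
      rw [Real.rpow_def_of_pos hπ, ← Real.exp_add, ← Real.exp_mul]
    have e3 : c = Real.exp (Real.log (2 * Real.pi) * ((n : ℝ) / (2 * p) - (n : ℝ) / 2)
        + Real.log p * (-(n : ℝ) / 2)) := by
      rw [hc_def, Real.rpow_def_of_pos hπ, Real.rpow_def_of_pos hp0, ← Real.exp_add]
    rw [e1, e2, e3, div_div, ← Real.exp_add, ← Real.exp_sub, ← Real.exp_add, ← Real.exp_add,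
      Real.exp_eq_exp]
    field_simp
    ring
  -- pointwise ENNReal kernel identity
  have key1 : ∀ x y : EuclideanSpace ℝ (Fin n),
      ENNReal.ofReal
          (Real.exp (-‖a • x - y‖ ^ 2 / (2 * p)) / (2 * Real.pi * p) ^ ((n : ℝ) / 2)) *
          ((ENNReal.ofReal (h y) / ENNReal.ofReal (stdGauss n y)) ^ (1 / p))
        = ENNReal.ofReal (c * Real.exp (-(a ^ 2 * ‖x‖ ^ 2) / (2 * p))) *
            (ENNReal.ofReal (Real.exp ((1 / p) * (inner ℝ (a • x) y : ℝ))) *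
              ENNReal.ofReal (h y) ^ (1 / p)) := by
    intro x y
    have hγ : 0 < stdGauss n y := by unfold stdGauss; positivity
    have hγp : 0 < stdGauss n y ^ (1 / p) := Real.rpow_pos_of_pos hγ _
    have hpinv : (0:ℝ) ≤ 1 / p := by positivity
    calc ENNReal.ofReal
          (Real.exp (-‖a • x - y‖ ^ 2 / (2 * p)) / (2 * Real.pi * p) ^ ((n : ℝ) / 2)) *
          ((ENNReal.ofReal (h y) / ENNReal.ofReal (stdGauss n y)) ^ (1 / p))
        = ENNReal.ofReal
            (Real.exp (-‖a • x - y‖ ^ 2 / (2 * p)) / (2 * Real.pi * p) ^ ((n : ℝ) / 2)) *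
            (ENNReal.ofReal (h y) ^ (1 / p) / ENNReal.ofReal (stdGauss n y ^ (1 / p))) := by
          rw [ENNReal.div_rpow_of_nonneg _ _ hpinv, ENNReal.ofReal_rpow_of_pos hγ]
      _ = ENNReal.ofReal
            (Real.exp (-‖a • x - y‖ ^ 2 / (2 * p)) / (2 * Real.pi * p) ^ ((n : ℝ) / 2) /
              stdGauss n y ^ (1 / p)) * ENNReal.ofReal (h y) ^ (1 / p) := by
          rw [ENNReal.ofReal_div_of_pos hγp]
          simp only [div_eq_mul_inv]
          ring
      _ = ENNReal.ofReal ((c * Real.exp (-(a ^ 2 * ‖x‖ ^ 2) / (2 * p))) *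
            Real.exp ((1 / p) * (inner ℝ (a • x) y : ℝ))) * ENNReal.ofReal (h y) ^ (1 / p) := by
          rw [keyreal x y]
      _ = _ := by
          rw [ENNReal.ofReal_mul (by positivity), mul_assoc]
  -- the semigroup applied to (h/γ)^{1/p}
  have hPS : ∀ x, ouSemigroup s (fun y =>
        (ENNReal.ofReal (h y) / ENNReal.ofReal (stdGauss n y)) ^ (1 / p)) x
      = ENNReal.ofReal (c * Real.exp (-(a ^ 2 * ‖x‖ ^ 2) / (2 * p))) *
          expTransform p h (a • x) := by
    intro x
    unfold ouSemigroup expTransform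
    simp only [← ha_def, ← hp]
    rw [lintegral_congr (key1 x)]
    rw [lintegral_const_mul' _ _ ENNReal.ofReal_ne_top]
  -- pointwise identity for the q-th power against the Gaussian
  have key3 : ∀ x : EuclideanSpace ℝ (Fin n),
      (ENNReal.ofReal (c * Real.exp (-(a ^ 2 * ‖x‖ ^ 2) / (2 * p))) *
          expTransform p h (a • x)) ^ q * ENNReal.ofReal (stdGauss n x)
        = ENNReal.ofReal Kc * expTransform p h (a • x) ^ q := by
    intro x
    obtain ⟨hF0, hFt⟩ := hF (a • x)
    have hA : 0 < c * Real.exp (-(a ^ 2 * ‖x‖ ^ 2) / (2 * p)) := by positivity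
    rw [ENNReal.mul_rpow_of_ne_top ENNReal.ofReal_ne_top hFt.ne,
      ENNReal.ofReal_rpow_of_pos hA, mul_right_comm,
      ← ENNReal.ofReal_mul (Real.rpow_nonneg hA.le q)]
    congr 2
    have hzero : (-(a ^ 2 * ‖x‖ ^ 2) / (2 * p)) * q + (-‖x‖ ^ 2 / 2) = 0 := by
      rw [hqa]; field_simp; ring
    unfold stdGauss
    rw [Real.mul_rpow hc.le (Real.exp_nonneg _), ← Real.exp_mul]
    calc c ^ q * Real.exp ((-(a ^ 2 * ‖x‖ ^ 2) / (2 * p)) * q) *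
          ((2 * Real.pi) ^ (-(n : ℝ) / 2) * Real.exp (-‖x‖ ^ 2 / 2))
        = c ^ q * (2 * Real.pi) ^ (-(n : ℝ) / 2) *
            Real.exp ((-(a ^ 2 * ‖x‖ ^ 2) / (2 * p)) * q + (-‖x‖ ^ 2 / 2)) := by
          rw [Real.exp_add]; ring
      _ = Kc := by rw [hzero, Real.exp_zero, mul_one]
  -- change of variables
  have hjac : |((a : ℝ) ^ n)⁻¹| = Real.exp ((n : ℝ) * s) := by
    rw [abs_of_pos (by positivity), ha_def, ← Real.exp_nat_mul, ← Real.exp_neg]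
    congr 1; ring
  have changevar : ∫⁻ x, expTransform p h (a • x) ^ q
      = ENNReal.ofReal (Real.exp ((n : ℝ) * s)) * ∫⁻ x, expTransform p h x ^ q := by
    calc ∫⁻ x, expTransform p h (a • x) ^ q
        = ∫⁻ y, expTransform p h y ^ q ∂(Measure.map (a • ·) volume) :=
          (lintegral_map hGmeas (measurable_const_smul a)).symm
      _ = _ := by
          rw [Measure.map_addHaar_smul volume ha.ne', lintegral_smul_measure, smul_eq_mul,
            finrank_euclideanSpace_fin, hjac]
  -- constant identity
  have hqq : q / (q - 1) = p := by
    have hq1 : q - 1 = -(a ^ 2)⁻¹ := by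
      rw [hqa, hpa]; field_simp; ring
    rw [hq1, hqa]; field_simp
  have keyconst : (((2 * Real.pi) ^ ((1 / p + 1 / (q / (q - 1))) / 2 - 1) /
      Real.sqrt (1 - Real.exp (-2 * s))) ^ n) ^ q = Kc := by
    rw [← hp, hqq, show (1 / p + 1 / p) / 2 - 1 = 1 / p - 1 from by ring,
      Real.sqrt_eq_rpow]
    have hB : (0:ℝ) < (2 * Real.pi) ^ (1 / p - 1) / p ^ (1 / (2:ℝ)) := by positivity
    rw [← Real.rpow_natCast ((2 * Real.pi) ^ (1 / p - 1) / p ^ (1 / (2:ℝ))) n,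
      ← Real.rpow_mul hB.le]
    rw [Real.rpow_def_of_pos hπ (1 / p - 1), Real.rpow_def_of_pos hp0 (1 / (2:ℝ)),
      ← Real.exp_sub, ← Real.exp_mul]
    rw [hKc_def, hc_def, Real.rpow_def_of_pos hπ ((n : ℝ) / (2 * p) - (n : ℝ) / 2),
      Real.rpow_def_of_pos hp0 (-(n : ℝ) / 2), ← Real.exp_add, ← Real.exp_mul,
      Real.rpow_def_of_pos hπ (-(n : ℝ) / 2), ← Real.exp_add, Real.exp_eq_exp]
    rw [hqa, hpa]
    have h1a : ((1:ℝ) - a ^ 2) ≠ 0 := by nlinarith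
    field_simp [h1a, pow_ne_zero 2 ha.ne']
    ring
  -- put everything together
  unfold gaussLqNormPow
  have key4 : ∀ x, (ouSemigroup s (fun y =>
        (ENNReal.ofReal (h y) / ENNReal.ofReal (stdGauss n y)) ^ (1 / p)) x) ^ q *
        ENNReal.ofReal (stdGauss n x)
      = ENNReal.ofReal Kc * expTransform p h (a • x) ^ q := by
    intro x
    rw [hPS x]
    exact key3 x
  rw [lintegral_congr key4, lintegral_const_mul' _ _ ENNReal.ofReal_ne_top, changevar,
    ← mul_assoc, ← ENNReal.ofReal_mul hKc0.le, ← keyconst]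

end
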